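/- arXiv:2401.05794 — 2 statements merged into one kernel-verified Lean document; each statement's English description precedes it below -/
import Mathlib

section
/- Let k = 2^m with m a positive integer (so k ≥ 2 is a power of 2), let F be a finite field with exactly k elements, and let S be a subset of F^2. Then there exists u in F^2 such that for every subset Z of F with exactly k/2 elements, the number of elements s of S with s·u ∈ Z is at most (|S| + k^{3/2})/2, where the inequality is an inequality of real numbers (k^{3/2} = k·√k). -/
open Finset

private lemma ker_card {F : Type*} [Field F] [Fintype F] [DecidableEq F]
    (a b : F) (h : a ≠ 0 ∨ b ≠ 0) :
    (Finset.univ.filter (fun u : Fin 2 → F => a * u 0 + b * u 1 = 0)).card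
      = Fintype.card F := by
  rw [← Finset.card_univ (α := F)]
  rcases h with ha | hb
  · apply Finset.card_bij' (fun u _ => u 1) (fun c _ => ![-(b * c) / a, c])
    · intro u hu; simp
    · intro c _; simp only [Finset.mem_filter, Finset.mem_univ, true_and,
        Matrix.cons_val_zero, Matrix.cons_val_one, Matrix.head_cons]
      field_simp
      ring
    · intro u hu
      simp only [Finset.mem_filter, Finset.mem_univ, true_and] at hu
      funext i
      fin_cases i
      · simp only [Fin.zero_eta, Matrix.cons_val_zero]
        field_simp
        linear_combination -hu
      · simp
    · intro c _; simp
  · apply Finset.card_bij' (fun u _ => u 0) (fun c _ => ![c, -(a * c) / b])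
    · intro u hu; simp
    · intro c _; simp only [Finset.mem_filter, Finset.mem_univ, true_and,
        Matrix.cons_val_zero, Matrix.cons_val_one, Matrix.head_cons]
      field_simp
      ring
    · intro u hu
      simp only [Finset.mem_filter, Finset.mem_univ, true_and] at hu
      funext i
      fin_cases i
      · simp
      · simp only [Fin.mk_one, Matrix.cons_val_one, Matrix.cons_val_zero, Matrix.head_cons]
        field_simp
        linear_combination -hu
    · intro c _; simp

private lemma sq_sum_eq {F : Type*} [Field F] [Fintype F] [DecidableEq F]
    (S : Finset (Fin 2 → F)) (u : Fin 2 → F) :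
    ∑ z : F, ((S.filter (fun s => (∑ i, s i * u i) = z)).card : ℝ) ^ 2
    = ∑ s ∈ S, ∑ t ∈ S, if (∑ i, s i * u i) = (∑ i, t i * u i) then (1:ℝ) else 0 := by
  have h : ∀ z : F, ((S.filter (fun s => (∑ i, s i * u i) = z)).card : ℝ)
      = ∑ s ∈ S, if (∑ i, s i * u i) = z then (1:ℝ) else 0 := by
    intro z; rw [Finset.sum_boole]
  simp_rw [h, sq, Finset.sum_mul_sum]
  rw [Finset.sum_comm]
  refine Finset.sum_congr rfl fun s _ => ?_
  rw [Finset.sum_comm]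
  refine Finset.sum_congr rfl fun t _ => ?_
  have h2 : ∀ z : F, (if (∑ i, s i * u i) = z then (1:ℝ) else 0) *
      (if (∑ i, t i * u i) = z then (1:ℝ) else 0)
      = if z = (∑ i, s i * u i) then (if (∑ i, s i * u i) = (∑ i, t i * u i) then (1:ℝ) else 0) else 0 := by
    intro z
    by_cases h1 : z = (∑ i, s i * u i) <;> by_cases h2 : (∑ i, s i * u i) = (∑ i, t i * u i) <;>
      simp_all <;> intro h3 <;> simp_all
  simp_rw [h2]
  rw [Finset.sum_ite_eq']
  simp

set_option maxHeartbeats 1000000 in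
theorem exists_good_direction (m : ℕ) (hm : 0 < m) (k : ℕ) (hk : k = 2 ^ m)
    (F : Type*) [Field F] [Fintype F] [DecidableEq F] (hcard : Fintype.card F = k)
    (S : Finset (Fin 2 → F)) :
    ∃ u : Fin 2 → F, ∀ Z : Finset F, Z.card = k / 2 →
      ((S.filter (fun s => (∑ i, s i * u i) ∈ Z)).card : ℝ)
        ≤ ((S.card : ℝ) + k * Real.sqrt k) / 2 := by
  classical
  set n : ℝ := (S.card : ℝ) with hn
  set K : ℝ := (k : ℝ) with hKdef
  have hk2 : (2:ℕ) ≤ k := by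
    rw [hk]
    calc (2:ℕ) = 2 ^ 1 := by norm_num
    _ ≤ 2 ^ m := Nat.pow_le_pow_right (by norm_num) hm
  have hK2 : (2:ℝ) ≤ K := by rw [hKdef]; exact_mod_cast hk2
  have hK0 : (0:ℝ) < K := by linarith
  have hn0 : 0 ≤ n := Nat.cast_nonneg _
  have card2 : Fintype.card (Fin 2 → F) = k ^ 2 := by
    simp [hcard, sq]
  -- the collision-count function
  set f : (Fin 2 → F) → ℝ := fun u =>
    ∑ s ∈ S, ∑ t ∈ S, if (∑ i, s i * u i) = (∑ i, t i * u i) then (1:ℝ) else 0 with hf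
  -- sum of f over all u
  have hsum_f : ∑ u : Fin 2 → F, f u = n * K ^ 2 + (n ^ 2 - n) * K := by
    have hinner : ∀ s ∈ S, ∀ t ∈ S,
        (∑ u : Fin 2 → F, if (∑ i, s i * u i) = (∑ i, t i * u i) then (1:ℝ) else 0)
        = if s = t then K ^ 2 else K := by
      intro s _ t _
      rw [Finset.sum_boole]
      by_cases hst : s = t
      · subst hst
        rw [if_pos rfl]
        have htriv : (Finset.univ.filter (fun u : Fin 2 → F => (∑ i, s i * u i) = (∑ i, s i * u i))) = Finset.univ := by simp
        rw [htriv, Finset.card_univ, card2]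
        push_cast [hKdef]; ring
      · rw [if_neg hst]
        have hcond : ∀ u : Fin 2 → F,
            ((∑ i, s i * u i) = (∑ i, t i * u i)) ↔ ((s 0 - t 0) * u 0 + (s 1 - t 1) * u 1 = 0) := by
          intro u
          rw [Fin.sum_univ_two, Fin.sum_univ_two]
          constructor <;> intro h <;> [linear_combination h; linear_combination h]
        have hab : s 0 - t 0 ≠ 0 ∨ s 1 - t 1 ≠ 0 := by
          by_contra hc
          push_neg at hc
          apply hst
          funext i
          fin_cases i
          · have := hc.1; simpa [sub_eq_zero] using this
          · have := hc.2; simpa [sub_eq_zero] using this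
        have : (Finset.univ.filter (fun u : Fin 2 → F => (∑ i, s i * u i) = (∑ i, t i * u i)))
            = (Finset.univ.filter (fun u : Fin 2 → F => (s 0 - t 0) * u 0 + (s 1 - t 1) * u 1 = 0)) := by
          apply Finset.filter_congr
          intro u _
          exact_mod_cast hcond u  -- probably needs simp [hcond]
        rw [this, ker_card _ _ hab, hcard]
    have hswap : ∑ u : Fin 2 → F, f u = ∑ s ∈ S, ∑ t ∈ S, (if s = t then K ^ 2 else K) := by
      rw [hf, Finset.sum_comm]
      refine Finset.sum_congr rfl fun s hs => ?_
      rw [Finset.sum_comm]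
      exact Finset.sum_congr rfl fun t ht => hinner s hs t ht
    rw [hswap]
    have hrow : ∀ s ∈ S, ∑ t ∈ S, (if s = t then K ^ 2 else K) = K ^ 2 - K + n * K := by
      intro s hs
      have hsplit : ∀ t : Fin 2 → F, (if s = t then K ^ 2 else K)
          = K + (if s = t then K ^ 2 - K else 0) := by
        intro t; split_ifs <;> ring
      simp_rw [hsplit]
      rw [Finset.sum_add_distrib, Finset.sum_const, Finset.sum_ite_eq, if_pos hs,
        nsmul_eq_mul, hn]
      ring
    rw [Finset.sum_congr rfl hrow, Finset.sum_const, nsmul_eq_mul, ← hn]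
    ring
  -- value at zero
  have hf0 : f (0 : Fin 2 → F) = n ^ 2 := by
    rw [hf]
    simp only [Pi.zero_apply, mul_zero, Finset.sum_const_zero, if_pos rfl]
    rw [Finset.sum_const, Finset.sum_const, nsmul_eq_mul, nsmul_eq_mul, hn]
    simp [sq]
  -- pick a good nonzero direction
  have hne : ((Finset.univ : Finset (Fin 2 → F)).erase 0).Nonempty := by
    have h1 : 1 < Fintype.card (Fin 2 → F) := by rw [card2]; nlinarith [hk2]
    obtain ⟨x, hx⟩ := Fintype.exists_ne_of_one_lt_card h1 0
    exact ⟨x, Finset.mem_erase.2 ⟨hx, Finset.mem_univ x⟩⟩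
  have hcarde : ((((Finset.univ : Finset (Fin 2 → F)).erase 0)).card : ℝ) = K ^ 2 - 1 := by
    rw [Finset.card_erase_of_mem (Finset.mem_univ _), Finset.card_univ, card2]
    have h1 : (1:ℕ) ≤ k ^ 2 := by nlinarith
    rw [Nat.cast_sub h1]
    push_cast [hKdef]
    ring
  have hK21 : (0:ℝ) < K ^ 2 - 1 := by nlinarith
  have hsum_erase : ∑ u ∈ (Finset.univ : Finset (Fin 2 → F)).erase 0, f u
      = n * K ^ 2 + (n ^ 2 - n) * K - n ^ 2 := by
    rw [Finset.sum_erase_eq_sub (Finset.mem_univ 0), hsum_f, hf0]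
  obtain ⟨u, hu_mem, hu⟩ : ∃ u ∈ (Finset.univ : Finset (Fin 2 → F)).erase 0,
      f u ≤ (n * K ^ 2 + (n ^ 2 - n) * K - n ^ 2) / (K ^ 2 - 1) := by
    apply Finset.exists_le_of_sum_le hne
    rw [hsum_erase, Finset.sum_const, nsmul_eq_mul, hcarde,
      mul_div_cancel₀ _ (ne_of_gt hK21)]
  -- f u is at most n + n^2/K
  have hfn2 : f u ≤ n ^ 2 := by
    rw [hf]
    calc ∑ s ∈ S, ∑ t ∈ S, (if (∑ i, s i * u i) = (∑ i, t i * u i) then (1:ℝ) else 0)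
        ≤ ∑ s ∈ S, ∑ t ∈ S, (1:ℝ) := by
          refine Finset.sum_le_sum fun s _ => Finset.sum_le_sum fun t _ => ?_
          split_ifs <;> norm_num
      _ = n ^ 2 := by rw [Finset.sum_const, Finset.sum_const, nsmul_eq_mul, nsmul_eq_mul, hn]; ring
  have hfu : f u ≤ n + n ^ 2 / K := by
    rw [le_div_iff₀ hK21] at hu
    have h6 : f u * K ≤ n * K + n ^ 2 := by nlinarith [hu, hfn2, hK2, hn0, hK0]
    calc f u = (f u * K) / K := by field_simp
      _ ≤ (n * K + n ^ 2) / K := by gcongr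
      _ = n + n ^ 2 / K := by field_simp
  -- fiber counts for the chosen direction
  set N : F → ℝ := fun z => ((S.filter (fun s => (∑ i, s i * u i) = z)).card : ℝ) with hNdef
  have hcardF : ((Fintype.card F : ℕ) : ℝ) = K := by rw [hcard]
  have hNsum : ∑ z : F, N z = n := by
    have h1 := Finset.card_eq_sum_card_fiberwise
      (f := fun s : Fin 2 → F => ∑ i, s i * u i) (s := S) (t := (Finset.univ : Finset F))
      (fun x _ => Finset.mem_univ _)
    rw [hn, h1]
    push_cast
    rfl
  have hNsq : ∑ z : F, N z ^ 2 ≤ n + n ^ 2 / K := by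
    calc ∑ z : F, N z ^ 2 = f u := by rw [hNdef, hf]; exact sq_sum_eq S u
      _ ≤ n + n ^ 2 / K := hfu
  have hNnonneg : ∀ z, 0 ≤ N z := fun z => Nat.cast_nonneg _
  -- variance bound
  have hvar : ∑ z : F, (N z - n / K) ^ 2 ≤ n := by
    have hexp : ∀ z : F, (N z - n / K) ^ 2 = N z ^ 2 - 2 * (n / K) * N z + (n / K) ^ 2 := by
      intro z; ring
    rw [Finset.sum_congr rfl fun z _ => hexp z]
    rw [Finset.sum_add_distrib, Finset.sum_sub_distrib, Finset.sum_const, ← Finset.mul_sum,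
      hNsum, Finset.card_univ, nsmul_eq_mul, hcardF]
    have h2 : 2 * (n / K) * n = 2 * (n ^ 2 / K) := by ring
    have h3 : K * (n / K) ^ 2 = n ^ 2 / K := by field_simp
    linarith [hNsq, h2, h3]
  -- L1 bound via Cauchy-Schwarz
  have hnK2 : n ≤ K ^ 2 := by
    have h1 : S.card ≤ Fintype.card (Fin 2 → F) := Finset.card_le_univ S
    have h2 : S.card ≤ k ^ 2 := by omega
    rw [hn, hKdef]
    exact_mod_cast h2
  have habs : ∑ z : F, |N z - n / K| ≤ K * Real.sqrt K := by
    have hcs := Finset.sum_mul_sq_le_sq_mul_sq Finset.univ (fun _ : F => (1:ℝ))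
      (fun z => |N z - n / K|)
    simp only [one_mul, one_pow, sq_abs, Finset.sum_const, Finset.card_univ,
      nsmul_eq_mul, mul_one] at hcs
    rw [hcardF] at hcs
    have h0 : 0 ≤ ∑ z : F, |N z - n / K| := Finset.sum_nonneg fun z _ => abs_nonneg _
    have h1 : (∑ z : F, |N z - n / K|) ^ 2 ≤ K ^ 2 * K := by
      calc (∑ z : F, |N z - n / K|) ^ 2 ≤ K * ∑ z : F, (N z - n / K) ^ 2 := hcs
        _ ≤ K * n := by nlinarith [hvar, hK0]
        _ ≤ K ^ 2 * K := by nlinarith [hnK2, hK0]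
    calc ∑ z : F, |N z - n / K| = Real.sqrt ((∑ z : F, |N z - n / K|) ^ 2) :=
          (Real.sqrt_sq h0).symm
      _ ≤ Real.sqrt (K ^ 2 * K) := Real.sqrt_le_sqrt h1
      _ = K * Real.sqrt K := by
          rw [Real.sqrt_mul (by positivity), Real.sqrt_sq hK0.le]
  -- conclusion
  refine ⟨u, fun Z hZ => ?_⟩
  have hZcast : (Z.card : ℝ) = K / 2 := by
    have hdvd : 2 ∣ k := by rw [hk]; exact dvd_pow_self 2 hm.ne'
    have h2 : Z.card * 2 = k := by rw [hZ]; exact Nat.div_mul_cancel hdvd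
    have h3 : ((Z.card : ℝ)) * 2 = K := by rw [hKdef]; exact_mod_cast h2
    linarith
  have hcount : ((S.filter (fun s => (∑ i, s i * u i) ∈ Z)).card : ℝ) = ∑ z ∈ Z, N z := by
    have h1 := Finset.card_eq_sum_card_fiberwise
      (f := fun s : Fin 2 → F => ∑ i, s i * u i)
      (s := S.filter (fun s => (∑ i, s i * u i) ∈ Z)) (t := Z)
      (fun x hx => (Finset.mem_filter.1 hx).2)
    rw [h1]
    push_cast
    refine Finset.sum_congr rfl fun z hz => ?_
    congr 1
    rw [Finset.filter_filter]
    congr 1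
    apply Finset.filter_congr
    intro x _
    constructor
    · exact fun h => h.2
    · exact fun h => ⟨h ▸ hz, h⟩
  have hzero : ∑ z : F, (N z - n / K) = 0 := by
    rw [Finset.sum_sub_distrib, hNsum, Finset.sum_const, Finset.card_univ, nsmul_eq_mul, hcardF]
    field_simp
    ring
  have hhalf : ∑ z ∈ Z, (N z - n / K) ≤ (K * Real.sqrt K) / 2 := by
    calc ∑ z ∈ Z, (N z - n / K) ≤ ∑ z ∈ Z, (|N z - n / K| + (N z - n / K)) / 2 := by
          refine Finset.sum_le_sum fun z _ => ?_
          have := le_abs_self (N z - n / K)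
          linarith
      _ ≤ ∑ z : F, (|N z - n / K| + (N z - n / K)) / 2 := by
          refine Finset.sum_le_sum_of_subset_of_nonneg (Finset.subset_univ Z) fun z _ _ => ?_
          have := neg_abs_le (N z - n / K)
          linarith
      _ = ((∑ z : F, |N z - n / K|) + ∑ z : F, (N z - n / K)) / 2 := by
          rw [← Finset.sum_div, Finset.sum_add_distrib]
      _ ≤ (K * Real.sqrt K) / 2 := by rw [hzero]; linarith [habs]
  have hfinal : ∑ z ∈ Z, N z ≤ (n + K * Real.sqrt K) / 2 := by
    have hsplit : ∑ z ∈ Z, N z = (∑ z ∈ Z, (N z - n / K)) + Z.card * (n / K) := by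
      rw [Finset.sum_sub_distrib, Finset.sum_const, nsmul_eq_mul]
      ring
    rw [hsplit, hZcast]
    have : K / 2 * (n / K) = n / 2 := by field_simp
    linarith [hhalf]
  rw [hcount]
  calc ∑ z ∈ Z, N z ≤ (n + K * Real.sqrt K) / 2 := hfinal
    _ = ((S.card : ℝ) + (k : ℝ) * Real.sqrt (k : ℝ)) / 2 := by rw [hn, hKdef]
end

section
/- The function sending a natural number k to [ log(k·log k) / ( -log( (k-1)/k + 1/(k·log k) ) ) ] / (k·log k) tends to 1 as k tends to infinity. (This is the statement that the mistake bound log(1/α)/(-log((k-1)/k + α)) with α = 1/(k·log k) equals k·log(k)·(1+o(1)).) -/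
open Filter Real

private lemma aux_div_sub_one : Tendsto (fun y : ℝ => y / (y - 1)) atTop (nhds 1) := by
  have h0 : Tendsto (fun y : ℝ => (y - 1)⁻¹) atTop (nhds 0) := by
    exact tendsto_inv_atTop_zero.comp (tendsto_atTop_add_const_right atTop (-1) tendsto_id)
  have h1 : Tendsto (fun y : ℝ => 1 + (y - 1)⁻¹) atTop (nhds 1) := by
    simpa using (tendsto_const_nhds.add h0)
  refine h1.congr' ?_
  filter_upwards [eventually_gt_atTop (1:ℝ)] with y hy
  have : y - 1 ≠ 0 := by linarith
  field_simp
  ring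

private lemma aux_slope : Tendsto (slope (fun t : ℝ => -Real.log (1 - t)) 0)
    (nhdsWithin 0 {(0:ℝ)}ᶜ) (nhds 1) := by
  have h1 : HasDerivAt (fun t : ℝ => 1 - t) (-1) 0 := by
    simpa using ((hasDerivAt_id (0:ℝ)).const_sub 1)
  have h2 : HasDerivAt (fun t : ℝ => Real.log (1 - t)) (-1) 0 := by
    have := (Real.hasDerivAt_log (by norm_num : (1:ℝ) - 0 ≠ 0)).comp 0 h1
    exact this.congr_deriv (by norm_num)
  have h3 : HasDerivAt (fun t : ℝ => -Real.log (1 - t)) 1 0 := by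
    exact h2.neg.congr_deriv (by norm_num)
  exact hasDerivAt_iff_tendsto_slope.mp h3

open Filter Real in
theorem agnostic_bound_asymptotic :
    Tendsto (fun k : ℕ =>
        (Real.log ((k : ℝ) * Real.log k) /
          (-Real.log (((k : ℝ) - 1) / (k : ℝ) + 1 / ((k : ℝ) * Real.log k)))) /
        ((k : ℝ) * Real.log k))
      atTop (nhds 1) := by
  set e : ℕ → ℝ := fun k => 1 / (k : ℝ) - 1 / ((k : ℝ) * Real.log k) with he
  have hnat : Tendsto (fun k : ℕ => (k : ℝ)) atTop atTop := tendsto_natCast_atTop_atTop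
  have hlogk : Tendsto (fun k : ℕ => Real.log k) atTop atTop :=
    Real.tendsto_log_atTop.comp hnat
  have hX : Tendsto (fun k : ℕ => (k : ℝ) * Real.log k) atTop atTop :=
    hnat.atTop_mul_atTop₀ hlogk
  -- three facts about large k
  have hbig : ∀ᶠ k : ℕ in atTop, 3 ≤ (k : ℝ) ∧ 1 < Real.log k := by
    filter_upwards [hnat.eventually_ge_atTop 3, hlogk.eventually_gt_atTop 1] with k h1 h2
    exact ⟨h1, h2⟩
  -- e tends to 0 within ≠ 0
  have he0 : Tendsto e atTop (nhds 0) := by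
    have h1 : Tendsto (fun k : ℕ => ((k : ℝ))⁻¹) atTop (nhds 0) := hnat.inv_tendsto_atTop
    have h2 : Tendsto (fun k : ℕ => ((k : ℝ) * Real.log k)⁻¹) atTop (nhds 0) :=
      hX.inv_tendsto_atTop
    have h := h1.sub h2
    rw [sub_zero] at h
    exact h.congr (fun k => by simp only [he, one_div])
  have hepos : ∀ᶠ k : ℕ in atTop, 0 < e k := by
    filter_upwards [hbig] with k ⟨h3, hL⟩
    have hk0 : (0:ℝ) < k := by linarith
    have hL0 : (0:ℝ) < Real.log k := by linarith
    have hX0 : (0:ℝ) < (k:ℝ) * Real.log k := mul_pos hk0 hL0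
    have : 1 / ((k:ℝ) * Real.log k) < 1 / (k : ℝ) := by
      apply one_div_lt_one_div_of_lt hk0
      nlinarith
    simpa [he] using sub_pos.mpr this
  have he' : Tendsto e atTop (nhdsWithin 0 {(0:ℝ)}ᶜ) := by
    rw [tendsto_nhdsWithin_iff]
    refine ⟨he0, ?_⟩
    filter_upwards [hepos] with k hk
    exact ne_of_gt hk
  -- factor A
  have hA : Tendsto (fun k : ℕ => 1 + Real.log (Real.log k) / Real.log k) atTop (nhds 1) := by
    have h0 : Tendsto (fun x : ℝ => Real.log x / x) atTop (nhds 0) := by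
      simpa using Real.isLittleO_log_id_atTop.tendsto_div_nhds_zero
    simpa using tendsto_const_nhds.add (h0.comp hlogk)
  -- factor B
  have hB : Tendsto (fun k : ℕ => Real.log k / (Real.log k - 1)) atTop (nhds 1) :=
    aux_div_sub_one.comp hlogk
  -- factor C
  have hC : Tendsto (fun k : ℕ => slope (fun t : ℝ => -Real.log (1 - t)) 0 (e k))
      atTop (nhds 1) := aux_slope.comp he'
  have hmain : Tendsto (fun k : ℕ =>
      (1 + Real.log (Real.log k) / Real.log k) * (Real.log k / (Real.log k - 1)) *
      (slope (fun t : ℝ => -Real.log (1 - t)) 0 (e k))⁻¹) atTop (nhds 1) := by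
    have := (hA.mul hB).mul (hC.inv₀ one_ne_zero)
    simpa using this
  refine hmain.congr' ?_
  filter_upwards [hbig, hepos] with k ⟨h3, hL⟩ hek
  have hk0 : (0:ℝ) < k := by linarith
  have hL0 : (0:ℝ) < Real.log k := by linarith
  have hX0 : (0:ℝ) < (k:ℝ) * Real.log k := mul_pos hk0 hL0
  set n : ℝ := (k : ℝ)
  set L : ℝ := Real.log k
  set X : ℝ := n * L with hXdef
  -- rewrite argument of log as 1 - e k
  have harg : (n - 1) / n + 1 / X = 1 - e k := by
    have hn : n ≠ 0 := ne_of_gt hk0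
    have hXne : X ≠ 0 := ne_of_gt hX0
    have hh : e k = 1 / n - 1 / X := rfl
    rw [hh]
    field_simp
    ring
  have h1me : 0 < 1 - e k ∧ 1 - e k < 1 := by
    constructor
    · have : e k = 1/n - 1/X := rfl
      have h1 : 1/n ≤ 1/3 := by
        apply one_div_le_one_div_of_le <;> linarith
      have h2 : 0 < 1/X := by positivity
      rw [this]; linarith
    · linarith
  have hD : 0 < -Real.log (1 - e k) := by
    have := Real.log_neg h1me.1 h1me.2
    linarith
  have hslope : slope (fun t : ℝ => -Real.log (1 - t)) 0 (e k)
      = (-Real.log (1 - e k)) / e k := by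
    rw [slope_def_field]
    simp
  have hXe : X * e k = L - 1 := by
    have hn : n ≠ 0 := ne_of_gt hk0
    have hLne : L ≠ 0 := ne_of_gt hL0
    have hh : e k = 1 / n - 1 / X := rfl
    rw [hh, hXdef]
    field_simp
  have hlogX : Real.log X = L + Real.log L :=
    Real.log_mul (ne_of_gt hk0) (ne_of_gt hL0)
  -- now compute
  rw [harg, hslope, hlogX]
  set D := -Real.log (1 - e k) with hDdef
  have hDne : D ≠ 0 := ne_of_gt hD
  have heke : e k ≠ 0 := ne_of_gt hek
  have hLne : L ≠ 0 := ne_of_gt hL0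
  have hL1 : L - 1 ≠ 0 := by
    intro h
    rw [h] at hXe
    exact heke (by
      have := mul_eq_zero.mp hXe
      rcases this with h1 | h1
      · exact absurd h1 (ne_of_gt hX0)
      · exact h1)
  have hXne : X ≠ 0 := ne_of_gt hX0
  have hek' : e k = (L - 1) / X := by
    rw [eq_div_iff hXne, mul_comm]
    exact hXe
  rw [hek']
  field_simp
end
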